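/- For every natural number n ≥ 1, ∑_{j=1}^n (-1)^{j-1} (n!)² / ((n-j)!(n+j)!) = 1/2. -/

import Mathlib

lemma aux_partial (n : ℕ) (hn : 1 ≤ n) : ∀ m, m ≤ n →
    (∑ j ∈ Finset.Icc 1 m, (-1 : ℚ) ^ (j - 1) *
      ((n.factorial : ℚ)) ^ 2 / (((n - j).factorial : ℚ) * ((n + j).factorial : ℚ)))
    = 1/2 - (-1 : ℚ)^m * (n.factorial : ℚ)^2 * ((n : ℚ) - m) /
        (2 * n * ((n - m).factorial : ℚ) * ((n + m).factorial : ℚ)) := by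
  intro m
  induction m with
  | zero =>
    intro _
    simp only [Finset.Icc_eq_empty_of_lt (by norm_num : (1:ℕ) > 0), Nat.sub_zero, Nat.add_zero,
      Finset.sum_empty, pow_zero]
    have h1 : (n.factorial : ℚ) ≠ 0 := Nat.cast_ne_zero.mpr n.factorial_ne_zero
    have h2 : (n : ℚ) ≠ 0 := Nat.cast_ne_zero.mpr (by omega)
    field_simp
    ring
  | succ m ih =>
    intro hm
    have hmn : m ≤ n := le_of_lt (Nat.lt_of_lt_of_le (Nat.lt_succ_self m) hm)
    rw [Finset.sum_Icc_succ_top (by omega : 1 ≤ m + 1), ih hmn]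
    obtain ⟨k, hk⟩ : ∃ k, n = m + 1 + k := ⟨n - (m+1), by omega⟩
    subst hk
    have e1 : m + 1 + k - m = k + 1 := by omega
    have e2 : m + 1 + k - (m + 1) = k := by omega
    rw [e1, e2]
    have hf : ((k+1).factorial : ℚ) = (k+1) * k.factorial := by
      rw [Nat.factorial_succ]; push_cast; ring
    have hg : ((m + 1 + k + (m + 1)).factorial : ℚ)
        = (m + 1 + k + m + 1) * ((m + 1 + k + m).factorial : ℚ) := by
      have : m + 1 + k + (m + 1) = (m + 1 + k + m) + 1 := by omega
      rw [this, Nat.factorial_succ]; push_cast; ring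
    have h1 : ((m+1+k).factorial : ℚ) ≠ 0 := Nat.cast_ne_zero.mpr (Nat.factorial_ne_zero _)
    have h2 : (k.factorial : ℚ) ≠ 0 := Nat.cast_ne_zero.mpr (Nat.factorial_ne_zero _)
    have h3 : ((m+1+k+m).factorial : ℚ) ≠ 0 := Nat.cast_ne_zero.mpr (Nat.factorial_ne_zero _)
    have h4 : ((m:ℚ)+1+k) ≠ 0 := by positivity
    have h5 : ((k:ℚ)+1) ≠ 0 := by positivity
    have h6 : ((m:ℚ)+1+k+m+1) ≠ 0 := by positivity
    have hp : (-1:ℚ)^(m+1-1) = (-1:ℚ)^m := by norm_num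
    rw [hp, hf, hg]
    push_cast
    rw [pow_succ]
    field_simp
    ring

theorem alt_factorial_sum_half (n : ℕ) (hn : 1 ≤ n) :
    (∑ j ∈ Finset.Icc 1 n, (-1 : ℚ) ^ (j - 1) *
      ((n.factorial : ℚ)) ^ 2 / (((n - j).factorial : ℚ) * ((n + j).factorial : ℚ))) = 1 / 2 := by
  rw [aux_partial n hn n le_rfl]
  simp
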